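/- Let $V$ be a three-dimensional weakly admissible filtered $\varphi$-module over a field $L$, with three distinct Frobenius eigenvalues and three distinct Hodge jumps, which is indecomposable (not a direct sum of a weakly admissible line and a weakly admissible plane). Label the refinements of $V$ by orderings of the three eigenvalues $\{\phi, \phi', \phi''\}$; a refinement $(\varphi_1, \varphi_2, \varphi_3)$ is non-critical if the flag $L_{\varphi_1} \subset L_{\varphi_1} \oplus L_{\varphi_2} \subset V$ is in general position relative to the Hodge filtration. Then $V$ admits a nested sequence of non-critical refinements: there exist three refinements $\mathcal{F}_0, \mathcal{F}_1, \mathcal{F}_2$, each non-critical, with $\mathcal{F}_1 = c_1 \mathcal{F}_0$ and $\mathcal{F}_2 = c_2 \mathcal{F}_1$ for ordered cycles $c_1$ on $\{1,2,3\}$ and $c_2$ on a 2-element subinterval, forming a nested sequence of permutations in $\mathfrak{S}_3$. -/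

import Mathlib

open Module

/-- The Hodge number `t_H(W)`: sum of the jumps (with multiplicity) of the induced
filtration, all jumps lying in `[a, b]`. -/
noncomputable def tHodge {K V : Type*} [Field K] [AddCommGroup V] [Module K V]
    (Fil : ℤ → Submodule K V) (a b : ℤ) (W : Submodule K V) : ℤ :=
  ∑ m ∈ Finset.Icc a b,
    m * ((Module.finrank K ↥(W ⊓ Fil m) : ℤ) - (Module.finrank K ↥(W ⊓ Fil (m + 1)) : ℤ))

/-- The two ordered cycles on a subset `I` of `Fin n`. -/
def orderedCyclesFin {n : ℕ} (I : Finset (Fin n)) : Set (Equiv.Perm (Fin n)) :=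
  {(I.sort (· ≤ ·)).formPerm, ((I.sort (· ≤ ·)).reverse).formPerm}

/-- `{y, ystar} = {min I, max I}`. -/
def IsMinMaxPairFin {n : ℕ} (I : Finset (Fin n)) (y ystar : Fin n) : Prop :=
  (IsLeast (↑I : Set (Fin n)) y ∧ IsGreatest (↑I : Set (Fin n)) ystar) ∨
  (IsGreatest (↑I : Set (Fin n)) y ∧ IsLeast (↑I : Set (Fin n)) ystar)

/-- A nested sequence of permutations `σ_0 = id, σ_1, …, σ_{n-1}` of `Fin n`. -/
def IsNestedPermSeq (n : ℕ) (σ : ℕ → Equiv.Perm (Fin n)) : Prop :=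
  σ 0 = 1 ∧ ∃ I : ℕ → Finset (Fin n), I 0 = Finset.univ ∧
    ∀ i : ℕ, 1 ≤ i → i ≤ n - 1 →
      ∃ y ystar : Fin n, ∃ c : Equiv.Perm (Fin n),
        IsMinMaxPairFin (I (i - 1)) y ystar ∧
        I i = (I (i - 1)).erase y ∧
        c ∈ orderedCyclesFin (I (i - 1)) ∧ c ystar = y ∧
        σ i = c * σ (i - 1)

/-- The refinement of a 3-dimensional filtered `φ`-module given by the ordering
`(μ (τ 0), μ (τ 1), μ (τ 2))` of the eigenvalues is non-critical: the associated
`φ`-stable flag is in general position relative to the Hodge filtration. -/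
def RefNonCritical {K V : Type*} [Field K] [AddCommGroup V] [Module K V]
    (b : Fin 3 → V) (Fil : ℤ → Submodule K V) (kk : Fin 3 → ℤ)
    (τ : Equiv.Perm (Fin 3)) : Prop :=
  IsCompl (Submodule.span K {b (τ 0)}) (Fil (kk 1)) ∧
  IsCompl (Submodule.span K {b (τ 0)} ⊔ Submodule.span K {b (τ 1)}) (Fil (kk 2))


lemma sortEq (s : Finset (Fin 3)) (l : List (Fin 3)) (h : s.val = ↑l)
    (hs : List.Pairwise (· ≤ ·) l) : s.sort (· ≤ ·) = l := by
  refine List.Perm.eq_of_pairwise' (Finset.pairwise_sort _ _) hs ?_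
  rw [← Multiset.coe_eq_coe, Finset.sort_eq, h]

lemma sortU : Finset.sort (Finset.univ : Finset (Fin 3)) (· ≤ ·) = [0,1,2] :=
  sortEq _ _ (by decide) (by decide)
lemma sortE0 : Finset.sort ((Finset.univ : Finset (Fin 3)).erase 0) (· ≤ ·) = [1,2] :=
  sortEq _ _ (by decide) (by decide)
lemma sortE2 : Finset.sort ((Finset.univ : Finset (Fin 3)).erase 2) (· ≤ ·) = [0,1] :=
  sortEq _ _ (by decide) (by decide)

def cA1 : Equiv.Perm (Fin 3) := ([0,1,2] : List (Fin 3)).formPerm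
def cA2 : Equiv.Perm (Fin 3) := ([1,2] : List (Fin 3)).formPerm
def cB1 : Equiv.Perm (Fin 3) := ([2,1,0] : List (Fin 3)).formPerm
def cB2 : Equiv.Perm (Fin 3) := ([0,1] : List (Fin 3)).formPerm

def σA : ℕ → Equiv.Perm (Fin 3)
  | 0 => 1
  | 1 => cA1
  | _ => cA2 * cA1

def σB : ℕ → Equiv.Perm (Fin 3)
  | 0 => 1
  | 1 => cB1
  | _ => cB2 * cB1

lemma nestedA : IsNestedPermSeq 3 σA := by
  refine ⟨rfl, fun n => match n with
    | 0 => Finset.univ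
    | 1 => Finset.univ.erase 0
    | _ => (Finset.univ.erase 0).erase 1, rfl, ?_⟩
  intro i hi1 hi2
  interval_cases i
  · refine ⟨0, 2, cA1, Or.inl ⟨⟨by simp, fun x _ => by omega⟩, ⟨by simp, fun x _ => by omega⟩⟩,
      rfl, Or.inl (by rw [cA1]; exact congrArg List.formPerm sortU.symm), by decide, (mul_one _).symm⟩
  · refine ⟨1, 2, cA2, Or.inl ⟨⟨by simp, fun x hx => by simp at hx; omega⟩,
      ⟨by simp, fun x hx => by omega⟩⟩,
      rfl, Or.inl (by rw [cA2]; exact congrArg List.formPerm sortE0.symm), by decide, rfl⟩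

lemma nestedB : IsNestedPermSeq 3 σB := by
  refine ⟨rfl, fun n => match n with
    | 0 => Finset.univ
    | 1 => Finset.univ.erase 2
    | _ => (Finset.univ.erase 2).erase 1, rfl, ?_⟩
  intro i hi1 hi2
  interval_cases i
  · refine ⟨2, 0, cB1, Or.inr ⟨⟨by simp, fun x _ => by omega⟩, ⟨by simp, fun x _ => by omega⟩⟩,
      rfl, Or.inr (by rw [cB1]; exact (congrArg (fun l : List (Fin 3) => l.reverse.formPerm) sortU).symm), by decide, (mul_one _).symm⟩
  · refine ⟨1, 0, cB2, Or.inr ⟨⟨by simp, fun x hx => by simp at hx; omega⟩,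
      ⟨by simp, fun x hx => by omega⟩⟩,
      rfl, Or.inl (by rw [cB2]; exact congrArg List.formPerm sortE2.symm), by decide, rfl⟩

-- eval lemmas
lemma evA10 : (σA 1)⁻¹ 0 = 2 := by decide
lemma evA11 : (σA 1)⁻¹ 1 = 0 := by decide
lemma evA20 : (σA 2)⁻¹ 0 = 2 := by decide
lemma evA21 : (σA 2)⁻¹ 1 = 1 := by decide
lemma evB10 : (σB 1)⁻¹ 0 = 1 := by decide
lemma evB11 : (σB 1)⁻¹ 1 = 2 := by decide
lemma evB20 : (σB 2)⁻¹ 0 = 2 := by decide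
lemma evB21 : (σB 2)⁻¹ 1 = 1 := by decide

section Helpers

open Module Submodule

variable {K V : Type*} [Field K] [AddCommGroup V] [Module K V] [FiniteDimensional K V]

lemma rank1_sub (p W : Submodule K V) (h : p ≤ W) (hW : finrank K W = 1) :
    p = ⊥ ∨ p = W := by
  rcases Nat.lt_or_ge (finrank K p) 1 with h' | h'
  · exact Or.inl (Submodule.finrank_eq_zero.mp (by omega))
  · exact Or.inr (Submodule.eq_of_le_of_finrank_le h (by omega))

lemma tHodge_eval' (kk : Fin 3 → ℤ) (hk01 : kk 0 < kk 1) (hk12 : kk 1 < kk 2)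
    (Fil : ℤ → Submodule K V)
    (h0 : ∀ m : ℤ, m ≤ kk 0 → Fil m = ⊤)
    (h1 : ∀ m : ℤ, kk 0 < m → m ≤ kk 1 → Fil m = Fil (kk 1))
    (h2 : ∀ m : ℤ, kk 1 < m → m ≤ kk 2 → Fil m = Fil (kk 2))
    (h3 : ∀ m : ℤ, kk 2 < m → Fil m = ⊥)
    (W : Submodule K V) :
    tHodge Fil (kk 0) (kk 2) W =
      kk 0 * ((finrank K W : ℤ) - (finrank K ↥(W ⊓ Fil (kk 1)) : ℤ)) +
      kk 1 * ((finrank K ↥(W ⊓ Fil (kk 1)) : ℤ) - (finrank K ↥(W ⊓ Fil (kk 2)) : ℤ)) +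
      kk 2 * (finrank K ↥(W ⊓ Fil (kk 2)) : ℤ) := by
  have hsub : ({kk 0, kk 1, kk 2} : Finset ℤ) ⊆ Finset.Icc (kk 0) (kk 2) := by
    intro m hm
    simp only [Finset.mem_insert, Finset.mem_singleton] at hm
    rcases hm with rfl | rfl | rfl <;> simp [Finset.mem_Icc] <;> omega
  have hzero : ∀ m ∈ Finset.Icc (kk 0) (kk 2), m ∉ ({kk 0, kk 1, kk 2} : Finset ℤ) →
      m * ((finrank K ↥(W ⊓ Fil m) : ℤ) - (finrank K ↥(W ⊓ Fil (m + 1)) : ℤ)) = 0 := by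
    intro m hm hm'
    simp only [Finset.mem_Icc] at hm
    simp only [Finset.mem_insert, Finset.mem_singleton, not_or] at hm'
    obtain ⟨hne0, hne1, hne2⟩ := hm'
    have : Fil m = Fil (m + 1) := by
      rcases le_or_gt m (kk 1) with h | h
      · rw [h1 m (by omega) h, h1 (m+1) (by omega) (by omega)]
      · rw [h2 m h (by omega), h2 (m+1) (by omega) (by omega)]
    rw [this]; ring
  rw [tHodge, ← Finset.sum_subset hsub hzero]
  have e0 : Fil (kk 0) = ⊤ := h0 _ le_rfl
  have e1 : Fil (kk 0 + 1) = Fil (kk 1) := h1 _ (by omega) (by omega)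
  have e2 : Fil (kk 1 + 1) = Fil (kk 2) := h2 _ (by omega) (by omega)
  have e3 : Fil (kk 2 + 1) = ⊥ := h3 _ (by omega)
  rw [Finset.sum_insert (by simp; omega), Finset.sum_insert (by simp; omega),
    Finset.sum_singleton, e0, e1, e2, e3, inf_top_eq, inf_bot_eq]
  simp [finrank_bot]
  ring

end Helpers

/-- A 3-dimensional indecomposable weakly admissible filtered
`φ`-module with distinct Frobenius eigenvalues and distinct Hodge jumps admits a nested
sequence of non-critical refinements: there are refinements `𝓕_0, 𝓕_1, 𝓕_2`, each
non-critical, related by a nested sequence of permutations in `𝔖_3`. -/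
theorem stmt_14 {K V : Type*} [Field K] [AddCommGroup V] [Module K V]
    (b : Basis (Fin 3) K V)
    (μ : Fin 3 → K) (hμinj : Function.Injective μ) (hμ0 : ∀ i, μ i ≠ 0)
    (φ : Module.End K V) (hφ : ∀ i, φ (b i) = μ i • b i)
    (kk : Fin 3 → ℤ) (hk01 : kk 0 < kk 1) (hk12 : kk 1 < kk 2)
    (Fil : ℤ → Submodule K V) (hanti : Antitone Fil)
    (h0 : ∀ m : ℤ, m ≤ kk 0 → Fil m = ⊤)
    (h1 : ∀ m : ℤ, kk 0 < m → m ≤ kk 1 → Fil m = Fil (kk 1))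
    (h2 : ∀ m : ℤ, kk 1 < m → m ≤ kk 2 → Fil m = Fil (kk 2))
    (h3 : ∀ m : ℤ, kk 2 < m → Fil m = ⊥)
    (hd1 : Module.finrank K ↥(Fil (kk 1)) = 2)
    (hd2 : Module.finrank K ↥(Fil (kk 2)) = 1)
    (v : Fin 3 → ℤ)
    (hwa : ∀ S : Finset (Fin 3),
      tHodge Fil (kk 0) (kk 2) (⨆ i ∈ S, Submodule.span K {b i}) ≤ ∑ i ∈ S, v i)
    (hwaeq : tHodge Fil (kk 0) (kk 2) ⊤ = ∑ i : Fin 3, v i)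
    (hindec : ¬ ∃ i : Fin 3,
      tHodge Fil (kk 0) (kk 2) (Submodule.span K {b i}) = v i ∧
      tHodge Fil (kk 0) (kk 2) (⨆ j ∈ Finset.univ.erase i, Submodule.span K {b j}) =
        ∑ j ∈ Finset.univ.erase i, v j) :
    ∃ τ0 : Equiv.Perm (Fin 3), ∃ σ : ℕ → Equiv.Perm (Fin 3),
      IsNestedPermSeq 3 σ ∧
      ∀ i : ℕ, i ≤ 2 → RefNonCritical (fun j => b j) Fil kk (τ0 * (σ i)⁻¹) := by
  classical
  open Module Submodule in
  haveI : FiniteDimensional K V := Module.Finite.of_basis b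
  have hV3 : finrank K V = 3 := by rw [finrank_eq_card_basis b, Fintype.card_fin]
  have hbne : ∀ i : Fin 3, (b i : V) ≠ 0 := fun i => b.ne_zero i
  have hLr : ∀ i : Fin 3, finrank K (span K {b i} : Submodule K V) = 1 :=
    fun i => finrank_span_singleton (hbne i)
  -- basis vectors are not in spans of others
  have hnotmem2 : ∀ i j k : Fin 3, i ≠ j → i ≠ k →
      b i ∉ (span K {b j} ⊔ span K {b k} : Submodule K V) := by
    intro i j k hij hik hmem
    obtain ⟨y, hy, z, hz, hyz⟩ := Submodule.mem_sup.mp hmem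
    obtain ⟨c, rfl⟩ := Submodule.mem_span_singleton.mp hy
    obtain ⟨d, rfl⟩ := Submodule.mem_span_singleton.mp hz
    have := congrArg (fun w => b.repr w i) hyz
    simp only [map_add, map_smul, b.repr_self, Finsupp.smul_single, smul_eq_mul, mul_one,
      Finsupp.coe_add, Pi.add_apply, Finsupp.single_apply, (Ne.symm hij), (Ne.symm hik),
      if_false, if_neg (Ne.symm hij), if_neg (Ne.symm hik), Finsupp.coe_smul] at this
    simp at this
  have hnotmem1 : ∀ i j : Fin 3, i ≠ j → b i ∉ (span K {b j} : Submodule K V) :=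
    fun i j hij hmem => hnotmem2 i j j hij hij (Submodule.mem_sup_left hmem)
  have hPr : ∀ i j : Fin 3, i ≠ j →
      finrank K ((span K {b i} ⊔ span K {b j}) : Submodule K V) = 2 := by
    intro i j hij
    have hinf : (span K {b i} ⊓ span K {b j} : Submodule K V) = ⊥ := by
      rcases rank1_sub (span K {b i} ⊓ span K {b j}) (span K {b j}) inf_le_right (hLr j) with h | h
      · exact h
      · exact absurd (Submodule.span_singleton_le_iff_mem _ _ |>.mp
          (inf_eq_right.mp h)) (hnotmem1 j i (Ne.symm hij))
    have := Submodule.finrank_sup_add_finrank_inf_eq (span K {b i}) (span K {b j})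
    rw [hinf, hLr, hLr] at this
    simpa [finrank_bot] using this
  have hF21 : Fil (kk 2) ≤ Fil (kk 1) := hanti (le_of_lt hk12)
  have hEval := tHodge_eval' kk hk01 hk12 Fil h0 h1 h2 h3
  -- membership-driven infs with lines
  have hLinf : ∀ (x : V) (F : Submodule K V), x ∉ F → (span K {x} ⊓ F : Submodule K V) = ⊥ := by
    intro x F hx
    by_cases hx0 : x = 0
    · simp [hx0]
    rcases rank1_sub (span K {x} ⊓ F) (span K {x}) inf_le_left (finrank_span_singleton hx0) with h | h
    · exact h
    · exact absurd (Submodule.span_singleton_le_iff_mem _ _ |>.mp (inf_eq_left.mp h)) hx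
  -- tHodge of lines
  have lineTH0 : ∀ i : Fin 3, b i ∉ Fil (kk 1) →
      tHodge Fil (kk 0) (kk 2) (span K {b i}) = kk 0 := by
    intro i hi
    have e1 : (span K {b i} ⊓ Fil (kk 1) : Submodule K V) = ⊥ := hLinf _ _ hi
    have e2 : (span K {b i} ⊓ Fil (kk 2) : Submodule K V) = ⊥ :=
      hLinf _ _ (fun h => hi (hF21 h))
    rw [hEval, e1, e2, hLr]
    simp [finrank_bot]
  have lineTH1 : ∀ i : Fin 3, b i ∈ Fil (kk 1) → b i ∉ Fil (kk 2) →
      tHodge Fil (kk 0) (kk 2) (span K {b i}) = kk 1 := by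
    intro i hi hi2
    have e1 : (span K {b i} ⊓ Fil (kk 1) : Submodule K V) = span K {b i} :=
      inf_eq_left.mpr ((Submodule.span_singleton_le_iff_mem _ _).mpr hi)
    have e2 : (span K {b i} ⊓ Fil (kk 2) : Submodule K V) = ⊥ := hLinf _ _ hi2
    rw [hEval, e1, e2, hLr]
    simp [finrank_bot, hLr]
  have lineTH2 : ∀ i : Fin 3, b i ∈ Fil (kk 2) →
      tHodge Fil (kk 0) (kk 2) (span K {b i}) = kk 2 := by
    intro i hi
    have e1 : (span K {b i} ⊓ Fil (kk 1) : Submodule K V) = span K {b i} :=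
      inf_eq_left.mpr ((Submodule.span_singleton_le_iff_mem _ _).mpr (hF21 hi))
    have e2 : (span K {b i} ⊓ Fil (kk 2) : Submodule K V) = span K {b i} :=
      inf_eq_left.mpr ((Submodule.span_singleton_le_iff_mem _ _).mpr hi)
    rw [hEval, e1, e2, hLr]
    simp [hLr]
  -- plane ⊓ Fil (kk 1) facts
  have planeD1 : ∀ i j : Fin 3, i ≠ j →
      finrank K ↥((span K {b i} ⊔ span K {b j}) ⊓ Fil (kk 1)) = 1 ∨
      (span K {b i} ⊔ span K {b j} : Submodule K V) = Fil (kk 1) := by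
    intro i j hij
    have hsum := Submodule.finrank_sup_add_finrank_inf_eq
      (span K {b i} ⊔ span K {b j}) (Fil (kk 1))
    have hle3 : finrank K ↥((span K {b i} ⊔ span K {b j}) ⊔ Fil (kk 1)) ≤ 3 := by
      exact le_of_le_of_eq (Submodule.finrank_le _) hV3
    rw [hPr i j hij, hd1] at hsum
    have h2' : finrank K ↥((span K {b i} ⊔ span K {b j}) ⊓ Fil (kk 1)) ≤ 2 := by
      have := Submodule.finrank_mono
        (inf_le_left : (span K {b i} ⊔ span K {b j}) ⊓ Fil (kk 1) ≤ _)
      rwa [hPr i j hij] at this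
    rcases Nat.lt_or_ge (finrank K ↥((span K {b i} ⊔ span K {b j}) ⊓ Fil (kk 1))) 2 with h | h
    · exact Or.inl (by omega)
    · right
      have e : (span K {b i} ⊔ span K {b j}) ⊓ Fil (kk 1) = span K {b i} ⊔ span K {b j} :=
        Submodule.eq_of_le_of_finrank_le inf_le_left (by rw [hPr i j hij]; omega)
      exact Submodule.eq_of_le_of_finrank_le (inf_eq_left.mp e) (by rw [hd1, hPr i j hij])
  -- tHodge of planes
  have planeTH01 : ∀ i j : Fin 3, i ≠ j → ¬ Fil (kk 2) ≤ span K {b i} ⊔ span K {b j} →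
      (span K {b i} ⊔ span K {b j} : Submodule K V) ≠ Fil (kk 1) →
      tHodge Fil (kk 0) (kk 2) (span K {b i} ⊔ span K {b j}) = kk 0 + kk 1 := by
    intro i j hij hle hne
    have e2 : ((span K {b i} ⊔ span K {b j}) ⊓ Fil (kk 2) : Submodule K V) = ⊥ := by
      rcases rank1_sub ((span K {b i} ⊔ span K {b j}) ⊓ Fil (kk 2)) (Fil (kk 2)) inf_le_right hd2 with h | h
      · exact h
      · exact absurd (inf_eq_right.mp h) hle
    have e1 : finrank K ↥((span K {b i} ⊔ span K {b j}) ⊓ Fil (kk 1)) = 1 :=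
      (planeD1 i j hij).resolve_right hne
    rw [hEval, e2, e1, hPr i j hij]
    simp [finrank_bot]
  have planeTH02 : ∀ i j : Fin 3, i ≠ j → Fil (kk 2) ≤ span K {b i} ⊔ span K {b j} →
      (span K {b i} ⊔ span K {b j} : Submodule K V) ≠ Fil (kk 1) →
      tHodge Fil (kk 0) (kk 2) (span K {b i} ⊔ span K {b j}) = kk 0 + kk 2 := by
    intro i j hij hle hne
    have e2 : ((span K {b i} ⊔ span K {b j}) ⊓ Fil (kk 2) : Submodule K V) = Fil (kk 2) :=
      inf_eq_right.mpr hle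
    have e1 : finrank K ↥((span K {b i} ⊔ span K {b j}) ⊓ Fil (kk 1)) = 1 :=
      (planeD1 i j hij).resolve_right hne
    rw [hEval, e2, e1, hPr i j hij, hd2]
    push_cast
    ring
  have planeTH12 : ∀ i j : Fin 3, i ≠ j →
      (span K {b i} ⊔ span K {b j} : Submodule K V) = Fil (kk 1) →
      tHodge Fil (kk 0) (kk 2) (span K {b i} ⊔ span K {b j}) = kk 1 + kk 2 := by
    intro i j hij heq
    have e1 : ((span K {b i} ⊔ span K {b j}) ⊓ Fil (kk 1) : Submodule K V) =
        span K {b i} ⊔ span K {b j} := inf_eq_left.mpr (le_of_eq heq)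
    have e2 : ((span K {b i} ⊔ span K {b j}) ⊓ Fil (kk 2) : Submodule K V) = Fil (kk 2) :=
      inf_eq_right.mpr (heq ▸ hF21)
    rw [hEval, e1, e2, hPr i j hij, hd2]
    push_cast
    ring
  -- total
  have htot : kk 0 + kk 1 + kk 2 = ∑ i : Fin 3, v i := by
    rw [← hwaeq, hEval ⊤, top_inf_eq, top_inf_eq, finrank_top, hV3, hd1, hd2]
    push_cast
    ring
  -- erase sup
  have hPL : ∀ i j k : Fin 3, i ≠ j → i ≠ k → j ≠ k →
      (⨆ l ∈ Finset.univ.erase i, span K {b l}) = span K {b j} ⊔ span K {b k} := by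
    have he : ∀ i j k : Fin 3, i ≠ j → i ≠ k → j ≠ k →
        (Finset.univ.erase i = {j, k}) := by decide
    intro i j k hij hik hjk
    rw [he i j k hij hik hjk]
    rw [show ({j, k} : Finset (Fin 3)) = insert j {k} from rfl]
    rw [Finset.iSup_insert, Finset.iSup_singleton]
  -- contradiction driver
  have hcontra : ∀ i j k : Fin 3, i ≠ j → i ≠ k → j ≠ k →
      tHodge Fil (kk 0) (kk 2) (span K {b i}) +
        tHodge Fil (kk 0) (kk 2) (span K {b j} ⊔ span K {b k}) = kk 0 + kk 1 + kk 2 →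
      False := by
    intro i j k hij hik hjk hsum
    apply hindec
    refine ⟨i, ?_⟩
    have h1' := hwa {i}
    simp only [Finset.sum_singleton, Finset.iSup_singleton] at h1'
    have h2' := hwa (Finset.univ.erase i)
    rw [hPL i j k hij hik hjk] at h2'
    have hsv : ∑ l ∈ Finset.univ.erase i, v l + v i = ∑ l : Fin 3, v l :=
      Finset.sum_erase_add _ _ (Finset.mem_univ i)
    rw [hPL i j k hij hik hjk]
    constructor <;> linarith
  have hex3 : ∀ i j : Fin 3, i ≠ j → ∃ k : Fin 3, i ≠ k ∧ j ≠ k := by decide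
  -- no eigenvector in Fil (kk 2)
  have hnoTop : ∀ i : Fin 3, b i ∉ Fil (kk 2) := by
    intro i hi
    have hex : ∀ i : Fin 3, ∃ j k : Fin 3, i ≠ j ∧ i ≠ k ∧ j ≠ k := by decide
    obtain ⟨j, k, hij, hik, hjk⟩ := hex i
    have hF2 : Fil (kk 2) = span K {b i} :=
      (Submodule.eq_of_le_of_finrank_le
        ((Submodule.span_singleton_le_iff_mem _ _).mpr hi) (by rw [hd2, hLr])).symm
    have hnle : ¬ Fil (kk 2) ≤ span K {b j} ⊔ span K {b k} := by
      rw [hF2, Submodule.span_singleton_le_iff_mem]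
      exact hnotmem2 i j k hij hik
    have hne : (span K {b j} ⊔ span K {b k} : Submodule K V) ≠ Fil (kk 1) := by
      intro h
      exact hnle (hF21.trans (le_of_eq h.symm))
    exact hcontra i j k hij hik hjk
      (by rw [lineTH2 i hi, planeTH01 j k hjk hnle hne]; ring)
  -- at most one critical line
  have huniq : ∀ i j : Fin 3, i ≠ j → b i ∈ Fil (kk 1) → b j ∈ Fil (kk 1) → False := by
    intro i j hij hi hj
    obtain ⟨k, hik, hjk⟩ := hex3 i j hij
    have hP : (span K {b i} ⊔ span K {b j} : Submodule K V) = Fil (kk 1) :=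
      Submodule.eq_of_le_of_finrank_le
        (sup_le ((Submodule.span_singleton_le_iff_mem _ _).mpr hi)
          ((Submodule.span_singleton_le_iff_mem _ _).mpr hj))
        (by rw [hd1, hPr i j hij])
    have hk1 : b k ∉ Fil (kk 1) := by
      intro hk
      exact hnotmem2 k i j (Ne.symm hik) (Ne.symm hjk) (hP ▸ hk)
    exact hcontra k i j (Ne.symm hik) (Ne.symm hjk) hij
      (by rw [lineTH0 k hk1, planeTH12 i j hij hP]; ring)
  -- a critical plane kills all critical lines
  have hkey : ∀ i j : Fin 3, i ≠ j → Fil (kk 2) ≤ span K {b i} ⊔ span K {b j} →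
      b i ∈ Fil (kk 1) → False := by
    intro i j hij hle hi
    have hi2 : b i ∉ Fil (kk 2) := hnoTop i
    have hsub : span K {b i} ⊔ Fil (kk 2) ≤ (span K {b i} ⊔ span K {b j}) ⊓ Fil (kk 1) :=
      sup_le (le_inf le_sup_left ((Submodule.span_singleton_le_iff_mem _ _).mpr hi))
        (le_inf hle hF21)
    have hinf : (span K {b i} ⊓ Fil (kk 2) : Submodule K V) = ⊥ := hLinf _ _ hi2
    have hrank : finrank K ↥(span K {b i} ⊔ Fil (kk 2)) = 2 := by
      have := Submodule.finrank_sup_add_finrank_inf_eq (span K {b i}) (Fil (kk 2))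
      rw [hinf, hLr, hd2] at this
      simpa [finrank_bot] using this
    have h2le : 2 ≤ finrank K ↥((span K {b i} ⊔ span K {b j}) ⊓ Fil (kk 1)) := by
      exact le_trans (le_of_eq hrank.symm) (Submodule.finrank_mono hsub)
    rcases planeD1 i j hij with h | h
    · omega
    · exact huniq i j hij hi (h ▸ Submodule.mem_sup_right (Submodule.mem_span_singleton_self _))
  have hplaneNoLine : ∀ i j : Fin 3, i ≠ j → Fil (kk 2) ≤ span K {b i} ⊔ span K {b j} →
      ∀ c : Fin 3, b c ∉ Fil (kk 1) := by
    intro i j hij hle c hc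
    by_cases hci : c = i
    · exact hkey i j hij hle (hci ▸ hc)
    by_cases hcj : c = j
    · exact hkey j i (Ne.symm hij) (by rwa [sup_comm]) (hcj ▸ hc)
    · -- c distinct from i, j
      have hne : (span K {b i} ⊔ span K {b j} : Submodule K V) ≠ Fil (kk 1) := by
        intro h
        exact hnotmem2 c i j hci hcj (h ▸ hc)
      exact hcontra c i j hci hcj hij
        (by rw [lineTH1 c hc (hnoTop c), planeTH02 i j hij hle hne]; ring)
  -- at most one critical plane
  have hplaneUniq : ∀ i j k : Fin 3, i ≠ j → i ≠ k → j ≠ k →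
      Fil (kk 2) ≤ span K {b i} ⊔ span K {b j} →
      Fil (kk 2) ≤ span K {b i} ⊔ span K {b k} → False := by
    intro i j k hij hik hjk hle1 hle2
    have hall : ∀ l i j k : Fin 3, i ≠ j → i ≠ k → j ≠ k → l = i ∨ l = j ∨ l = k := by
      decide
    have hsup : (span K {b i} ⊔ span K {b j}) ⊔ (span K {b i} ⊔ span K {b k}) = ⊤ := by
      rw [eq_top_iff, ← b.span_eq]
      rw [Submodule.span_le]
      rintro x ⟨l, rfl⟩
      have hl : l = i ∨ l = j ∨ l = k := hall l i j k hij hik hjk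
      rcases hl with rfl | rfl | rfl
      · exact Submodule.mem_sup_left
          (Submodule.mem_sup_left (Submodule.mem_span_singleton_self _))
      · exact Submodule.mem_sup_left
          (Submodule.mem_sup_right (Submodule.mem_span_singleton_self _))
      · exact Submodule.mem_sup_right
          (Submodule.mem_sup_right (Submodule.mem_span_singleton_self _))
    have hsum := Submodule.finrank_sup_add_finrank_inf_eq
      (span K {b i} ⊔ span K {b j}) (span K {b i} ⊔ span K {b k})
    rw [hsup, finrank_top, hV3, hPr i j hij, hPr i k hik] at hsum
    have hinf : (span K {b i} ⊔ span K {b j}) ⊓ (span K {b i} ⊔ span K {b k})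
        = span K {b i} := by
      refine (Submodule.eq_of_le_of_finrank_le (le_inf le_sup_left le_sup_left) ?_).symm
      rw [hLr]; omega
    have hF2 : Fil (kk 2) ≤ span K {b i} := by
      rw [← hinf]; exact le_inf hle1 hle2
    have : Fil (kk 2) = span K {b i} :=
      Submodule.eq_of_le_of_finrank_le hF2 (by rw [hd2, hLr])
    exact hnoTop i (this ▸ Submodule.mem_span_singleton_self _)
  -- non-criticality from the two membership facts
  have href : ∀ τ : Equiv.Perm (Fin 3), b (τ 0) ∉ Fil (kk 1) →
      ¬ Fil (kk 2) ≤ span K {b (τ 0)} ⊔ span K {b (τ 1)} →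
      RefNonCritical (fun j => b j) Fil kk τ := by
    intro τ hτ0 hτP
    have h01 : τ 0 ≠ τ 1 := fun h => absurd (τ.injective h) (by decide)
    constructor
    · constructor
      · exact disjoint_iff.mpr (hLinf _ _ hτ0)
      · rw [codisjoint_iff]
        apply Submodule.eq_top_of_finrank_eq
        have := Submodule.finrank_sup_add_finrank_inf_eq (span K {b (τ 0)}) (Fil (kk 1))
        rw [hLinf _ _ hτ0, hLr, hd1] at this
        simp only [finrank_bot, Nat.add_zero] at this
        rw [this, hV3]
    · constructor
      · rw [disjoint_iff]
        rcases rank1_sub ((span K {b (τ 0)} ⊔ span K {b (τ 1)}) ⊓ Fil (kk 2)) (Fil (kk 2)) inf_le_right hd2 with h | h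
        · exact h
        · exact absurd (inf_eq_right.mp h) hτP
      · rw [codisjoint_iff]
        apply Submodule.eq_top_of_finrank_eq
        have hinf : ((span K {b (τ 0)} ⊔ span K {b (τ 1)}) ⊓ Fil (kk 2) : Submodule K V) = ⊥ := by
          rcases rank1_sub ((span K {b (τ 0)} ⊔ span K {b (τ 1)}) ⊓ Fil (kk 2)) (Fil (kk 2)) inf_le_right hd2 with h | h
          · exact h
          · exact absurd (inf_eq_right.mp h) hτP
        have := Submodule.finrank_sup_add_finrank_inf_eq
          (span K {b (τ 0)} ⊔ span K {b (τ 1)}) (Fil (kk 2))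
        rw [hinf, hPr _ _ h01, hd2] at this
        simp only [finrank_bot, Nat.add_zero] at this
        rw [this, hV3]
  have hτex : ∀ i j k : Fin 3, i ≠ j → i ≠ k → j ≠ k →
      ∃ τ : Equiv.Perm (Fin 3), τ 0 = i ∧ τ 1 = j ∧ τ 2 = k := by decide
  by_cases hcp : ∃ i j : Fin 3, i ≠ j ∧ Fil (kk 2) ≤ span K {b i} ⊔ span K {b j}
  · -- critical plane: choice B
    obtain ⟨i, j, hij, hle⟩ := hcp
    obtain ⟨k, hik, hjk⟩ := hex3 i j hij
    obtain ⟨τ0, ht0, ht1, ht2⟩ := hτex i k j hik hij (Ne.symm hjk)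
    have hnl : ∀ c : Fin 3, b c ∉ Fil (kk 1) := hplaneNoLine i j hij hle
    refine ⟨τ0, σB, nestedB, ?_⟩
    intro n hn
    interval_cases n
    · -- σB 0 = 1
      have e0 : (τ0 * (σB 0)⁻¹) 0 = i := by
        simp [σB, ht0]
      have e1 : (τ0 * (σB 0)⁻¹) 1 = k := by
        simp [σB, ht1]
      refine href _ (e0 ▸ hnl i) ?_
      rw [e0, e1]
      intro h
      exact hplaneUniq i j k hij hik hjk hle h
    · have e0 : (τ0 * (σB 1)⁻¹) 0 = k := by
        rw [Equiv.Perm.mul_apply, evB10, ht1]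
      have e1 : (τ0 * (σB 1)⁻¹) 1 = j := by
        rw [Equiv.Perm.mul_apply, evB11, ht2]
      refine href _ (e0 ▸ hnl k) ?_
      rw [e0, e1]
      intro h
      exact hplaneUniq j i k (Ne.symm hij) hjk hik (by rwa [sup_comm]) (by rwa [sup_comm])
    · have e0 : (τ0 * (σB 2)⁻¹) 0 = j := by
        rw [Equiv.Perm.mul_apply, evB20, ht2]
      have e1 : (τ0 * (σB 2)⁻¹) 1 = k := by
        rw [Equiv.Perm.mul_apply, evB21, ht1]
      refine href _ (e0 ▸ hnl j) ?_
      rw [e0, e1]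
      intro h
      exact hplaneUniq j i k (Ne.symm hij) hjk hik (by rwa [sup_comm]) h
  · -- no critical plane: choice A
    push_neg at hcp
    have hncp : ∀ i j : Fin 3, i ≠ j → ¬ Fil (kk 2) ≤ span K {b i} ⊔ span K {b j} :=
      fun i j hij => hcp i j hij
    -- choose a labeling (x, y, z) with b x, b z not critical lines
    have hchoice : ∃ x y z : Fin 3, x ≠ y ∧ x ≠ z ∧ y ≠ z ∧
        b x ∉ Fil (kk 1) ∧ b z ∉ Fil (kk 1) := by
      by_cases hcl : ∃ i : Fin 3, b i ∈ Fil (kk 1)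
      · obtain ⟨i, hi⟩ := hcl
        obtain ⟨j, k, hij, hik, hjk⟩ := (by decide :
          ∀ i : Fin 3, ∃ j k : Fin 3, i ≠ j ∧ i ≠ k ∧ j ≠ k) i
        exact ⟨j, i, k, Ne.symm hij, hjk, hik, fun h => huniq i j hij hi h,
          fun h => huniq i k hik hi h⟩
      · push_neg at hcl
        exact ⟨0, 1, 2, by decide, by decide, by decide, hcl 0, hcl 2⟩
    obtain ⟨x, y, z, hxy, hxz, hyz, hx, hz⟩ := hchoice
    obtain ⟨τ0, ht0, ht1, ht2⟩ := hτex x y z hxy hxz hyz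
    refine ⟨τ0, σA, nestedA, ?_⟩
    intro n hn
    interval_cases n
    · have e0 : (τ0 * (σA 0)⁻¹) 0 = x := by simp [σA, ht0]
      have e1 : (τ0 * (σA 0)⁻¹) 1 = y := by simp [σA, ht1]
      refine href _ (e0 ▸ hx) ?_
      rw [e0, e1]
      exact hncp x y hxy
    · have e0 : (τ0 * (σA 1)⁻¹) 0 = z := by rw [Equiv.Perm.mul_apply, evA10, ht2]
      have e1 : (τ0 * (σA 1)⁻¹) 1 = x := by rw [Equiv.Perm.mul_apply, evA11, ht0]
      refine href _ (e0 ▸ hz) ?_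
      rw [e0, e1]
      exact hncp z x (Ne.symm hxz)
    · have e0 : (τ0 * (σA 2)⁻¹) 0 = z := by rw [Equiv.Perm.mul_apply, evA20, ht2]
      have e1 : (τ0 * (σA 2)⁻¹) 1 = y := by rw [Equiv.Perm.mul_apply, evA21, ht1]
      refine href _ (e0 ▸ hz) ?_
      rw [e0, e1]
      exact hncp z y (Ne.symm hyz)
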